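/- Let X be a complex Banach space, G ⊆ X a bounded balanced domain, C ⊆ ℂ a convex domain with C ≠ ℂ, and f : G → C a holomorphic function with power series expansion f(x) = f(0) + Σ_{m≥1} (1/m!) D^m f(0)(x^m) in a neighbourhood of the origin. Then for every x ∈ (1/3)·G one has Σ_{m≥1} |(1/m!) D^m f(0)(x^m)| ≤ d(f(0), ∂C), where d(f(0), ∂C) is the Euclidean distance from f(0) to the boundary of C. -/

import Mathlib

open Complex Metric MeasureTheory intervalIntegral Real
open scoped Pointwise

private theorem key1 (g : ℂ → ℂ) (n : ℕ) :
    (2 * (π:ℂ)) * (cauchyPowerSeries g 0 1).coeff n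
      = ∫ θ in (0:ℝ)..2*π, (circleMap 0 1 θ)⁻¹ ^ n * g (circleMap 0 1 θ) := by
  have h : (cauchyPowerSeries g 0 1).coeff n
      = (2 * ↑π * I)⁻¹ • ∮ z in C(0, 1), (1 / (z - 0)) ^ n • (z - 0)⁻¹ • g z := by
    rw [FormalMultilinearSeries.coeff, show (1 : Fin n → ℂ) = fun _ => (1:ℂ) from rfl,
      cauchyPowerSeries_apply]
  rw [h, circleIntegral]
  have e1 : ∀ θ : ℝ, deriv (circleMap 0 1) θ •
      ((1 / (circleMap 0 1 θ - 0)) ^ n • (circleMap 0 1 θ - 0)⁻¹ • g (circleMap 0 1 θ))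
      = I * ((circleMap 0 1 θ)⁻¹ ^ n * g (circleMap 0 1 θ)) := by
    intro θ
    have hne : circleMap 0 1 θ ≠ 0 := by simp [circleMap_eq_center_iff]
    simp only [deriv_circleMap, sub_zero, smul_eq_mul, one_div]
    field_simp
  rw [intervalIntegral.integral_congr (fun θ _ => e1 θ), intervalIntegral.integral_const_mul,
    smul_eq_mul, ← mul_assoc, ← mul_assoc]
  have hπ : (π:ℂ) ≠ 0 := by exact_mod_cast Real.pi_ne_zero
  have : 2 * (π:ℂ) * (2 * ↑π * I)⁻¹ * I = 1 := by
    field_simp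
  rw [this, one_mul]

private theorem key2 (g : ℂ → ℂ) (hg : DifferentiableOn ℂ g (closedBall 0 1)) (m : ℕ) :
    ∫ θ in (0:ℝ)..2*π, (circleMap 0 1 θ) ^ (m+1) * g (circleMap 0 1 θ) = 0 := by
  have hF : ∀ z ∈ ball (0:ℂ) 1 \ (∅ : Set ℂ), DifferentiableAt ℂ (fun z => z ^ m * g z) z := by
    intro z hz
    exact (differentiableAt_pow m).mul
      ((hg.mono ball_subset_closedBall).differentiableAt (Metric.isOpen_ball.mem_nhds hz.1))
  have h0 := circleIntegral_eq_zero_of_differentiable_on_off_countable (f := fun z => z ^ m * g z)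
    (c := 0) (R := 1) zero_le_one Set.countable_empty
    (((continuousOn_pow m)).mul hg.continuousOn) hF
  rw [circleIntegral] at h0
  have e1 : ∀ θ : ℝ, deriv (circleMap 0 1) θ • ((circleMap 0 1 θ) ^ m * g (circleMap 0 1 θ))
      = I * ((circleMap 0 1 θ) ^ (m+1) * g (circleMap 0 1 θ)) := by
    intro θ
    simp only [deriv_circleMap, smul_eq_mul, pow_succ]
    ring
  rw [intervalIntegral.integral_congr (fun θ _ => e1 θ), intervalIntegral.integral_const_mul] at h0
  exact (mul_eq_zero.1 h0).resolve_left I_ne_zero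


private theorem key3 (m : ℕ) :
    ∫ θ in (0:ℝ)..2*π, (circleMap 0 1 θ)⁻¹ ^ (m+1) = 0 := by
  have e1 : ∀ θ : ℝ, (circleMap 0 1 θ)⁻¹ ^ (m+1) = Complex.exp ((-((m:ℂ)+1) * I) * θ) := by
    intro θ
    rw [circleMap_zero, ofReal_one, one_mul, ← Complex.exp_neg, ← Complex.exp_nat_mul]
    congr 1
    push_cast
    ring
  have hm : ((m:ℂ)+1) ≠ 0 := Nat.cast_add_one_ne_zero m
  have hc : (-((m:ℂ)+1) * I) ≠ 0 := mul_ne_zero (neg_ne_zero.2 hm) I_ne_zero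
  rw [intervalIntegral.integral_congr (fun θ _ => e1 θ), integral_exp_mul_complex hc]
  have h1 : Complex.exp (-((m:ℂ)+1) * I * (2*π)) = 1 := by
    rw [show (-((m:ℂ)+1) * I * (2*π)) = (-((m:ℕ)+1) : ℤ) * (2 * π * I) by push_cast; ring,
      Complex.exp_int_mul_two_pi_mul_I]
  rw [show ((2*π:ℝ):ℂ) = (2*(π:ℂ)) by push_cast; ring, h1]
  norm_num

private theorem carath (g : ℂ → ℂ) (hg : DifferentiableOn ℂ g (closedBall 0 1))
    (κ : ℂ) (t : ℝ) (hb : ∀ z ∈ closedBall (0:ℂ) 1, (κ * g z).re ≤ t) (m : ℕ) :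
    ‖κ * (cauchyPowerSeries g 0 1).coeff (m+1)‖ ≤ 2 * (t - (κ * g 0).re) := by
  set q := cauchyPowerSeries g 0 1 with hqdef
  set e : ℝ → ℂ := fun θ => circleMap 0 1 θ with hedef
  set u : ℝ → ℂ := fun θ => κ * g (e θ) with hudef
  have hmem : ∀ θ : ℝ, e θ ∈ closedBall (0:ℂ) 1 := fun θ =>
    sphere_subset_closedBall (circleMap_mem_sphere 0 one_pos.le θ)
  have hene : ∀ θ : ℝ, e θ ≠ 0 := fun θ => by simp [hedef, circleMap_eq_center_iff]
  have habse : ∀ θ : ℝ, ‖e θ‖ = 1 := fun θ => by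
    simp [hedef, circleMap]
  have he : Continuous e := continuous_circleMap 0 1
  have heinv : Continuous fun θ => (e θ)⁻¹ := he.inv₀ hene
  have hgec : Continuous fun θ => g (e θ) := hg.continuousOn.comp_continuous he hmem
  have hu : Continuous u := continuous_const.mul hgec
  set n := m + 1 with hndef
  -- A
  have hA : (2 * (π:ℂ)) * (κ * q.coeff n) = ∫ θ in (0:ℝ)..2*π, u θ * (e θ)⁻¹ ^ n := by
    calc (2 * (π:ℂ)) * (κ * q.coeff n) = κ * ((2 * (π:ℂ)) * q.coeff n) := by ring
    _ = κ * ∫ θ in (0:ℝ)..2*π, (e θ)⁻¹ ^ n * g (e θ) := by rw [key1]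
    _ = ∫ θ in (0:ℝ)..2*π, κ * ((e θ)⁻¹ ^ n * g (e θ)) := by
        rw [intervalIntegral.integral_const_mul]
    _ = ∫ θ in (0:ℝ)..2*π, u θ * (e θ)⁻¹ ^ n := by
        refine intervalIntegral.integral_congr fun θ _ => by simp [hudef]; ring
  -- B
  have hconj : ∀ θ : ℝ, (starRingEnd ℂ) (e θ) = (e θ)⁻¹ := by
    intro θ
    simp [hedef, circleMap, ← Complex.exp_conj, Complex.exp_neg]
  have hB : ∫ θ in (0:ℝ)..2*π, (starRingEnd ℂ) (u θ) * (e θ)⁻¹ ^ n = 0 := by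
    have h2 : ∫ θ in (0:ℝ)..2*π, u θ * (e θ) ^ n = 0 := by
      have := key2 g hg m
      calc ∫ θ in (0:ℝ)..2*π, u θ * (e θ) ^ n
          = κ * ∫ θ in (0:ℝ)..2*π, (e θ) ^ n * g (e θ) := by
            rw [← intervalIntegral.integral_const_mul]
            exact intervalIntegral.integral_congr fun θ _ => by simp [hudef]; ring
        _ = 0 := by rw [this, mul_zero]
    have hint : IntervalIntegrable (fun θ => u θ * (e θ) ^ n) volume 0 (2*π) :=
      (hu.mul (he.pow n)).intervalIntegrable _ _
    have := (Complex.conjCLE.toContinuousLinearMap).intervalIntegral_comp_comm hint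
    rw [h2] at this
    simp only [ContinuousLinearEquiv.coe_coe, Complex.conjCLE_apply, map_zero] at this
    rw [← this]
    refine intervalIntegral.integral_congr fun θ _ => ?_
    simp only [map_mul, map_pow, hconj]
  -- C
  have hC : ∫ θ in (0:ℝ)..2*π, ((2*t:ℝ):ℂ) * (e θ)⁻¹ ^ n = 0 := by
    rw [intervalIntegral.integral_const_mul, key3, mul_zero]
  -- combine
  have hint1 : IntervalIntegrable (fun θ => u θ * (e θ)⁻¹ ^ n) volume 0 (2*π) :=
    (hu.mul (heinv.pow n)).intervalIntegrable _ _
  have hint2 : IntervalIntegrable (fun θ => (starRingEnd ℂ) (u θ) * (e θ)⁻¹ ^ n) volume 0 (2*π) :=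
    ((Complex.continuous_conj.comp hu).mul (heinv.pow n)).intervalIntegrable _ _
  have hint3 : IntervalIntegrable (fun θ => ((2*t:ℝ):ℂ) * (e θ)⁻¹ ^ n) volume 0 (2*π) :=
    (continuous_const.mul (heinv.pow n)).intervalIntegrable _ _
  have hD : (2 * (π:ℂ)) * (κ * q.coeff n)
      = ∫ θ in (0:ℝ)..2*π, ((2*(u θ).re - 2*t : ℝ):ℂ) * (e θ)⁻¹ ^ n := by
    rw [hA, ← add_zero (∫ θ in (0:ℝ)..2*π, u θ * (e θ)⁻¹ ^ n), ← hB,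
      ← intervalIntegral.integral_add hint1 hint2]
    rw [show (∫ θ in (0:ℝ)..2*π, u θ * (e θ)⁻¹ ^ n + (starRingEnd ℂ) (u θ) * (e θ)⁻¹ ^ n)
        = (∫ θ in (0:ℝ)..2*π, u θ * (e θ)⁻¹ ^ n + (starRingEnd ℂ) (u θ) * (e θ)⁻¹ ^ n) - 0
        from (sub_zero _).symm, ← hC,
      ← intervalIntegral.integral_sub (hint1.add hint2) hint3]
    refine intervalIntegral.integral_congr fun θ _ => ?_
    have hre : u θ + (starRingEnd ℂ) (u θ) = ((2 * (u θ).re : ℝ) : ℂ) := Complex.add_conj _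
    push_cast
    rw [← add_mul, ← sub_mul, hre]
    push_cast
    ring
  -- norm bound
  have habsinv : ∀ θ : ℝ, ‖(e θ)⁻¹ ^ n‖ = 1 := fun θ => by
    rw [norm_pow, norm_inv, habse θ]; simp
  have hnorm : (2 * Real.pi) * ‖κ * q.coeff n‖ ≤ ∫ θ in (0:ℝ)..2*Real.pi, (2*t - 2*(u θ).re) := by
    have h1 : ‖(2 * (π:ℂ)) * (κ * q.coeff n)‖ = (2 * Real.pi) * ‖κ * q.coeff n‖ := by
      rw [norm_mul]
      congr 1
      simp [Real.pi_pos.le, abs_of_nonneg]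
    rw [← h1, hD]
    refine le_trans (intervalIntegral.norm_integral_le_integral_norm Real.two_pi_pos.le) ?_
    have hure : Continuous fun θ => (u θ).re := Complex.continuous_re.comp hu
    have hcont : Continuous fun θ => ‖(((2*(u θ).re - 2*t : ℝ)):ℂ) * (e θ)⁻¹ ^ n‖ :=
      (((Complex.continuous_ofReal.comp ((continuous_const.mul hure).sub continuous_const)).mul
        (heinv.pow n))).norm
    refine intervalIntegral.integral_mono_on Real.two_pi_pos.le
      (hcont.intervalIntegrable _ _)
      ((continuous_const.sub (continuous_const.mul hure)).intervalIntegrable _ _)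
      fun θ hθ => ?_
    rw [norm_mul, habsinv θ, mul_one, Complex.norm_real, Real.norm_eq_abs,
      abs_of_nonpos (by linarith [hb (e θ) (hmem θ)])]
    ring_nf
    linarith
  -- mean value
  have hq0 : q.coeff 0 = g 0 := by
    have hqb : HasFPowerSeriesOnBall g q 0 1 := by
      have := hg.hasFPowerSeriesOnBall (R := 1) one_pos
      simpa using this
    exact hqb.coeff_zero (fun _ => (1:ℂ))
  have hure : Continuous fun θ => (u θ).re := Complex.continuous_re.comp hu
  have hmean : (∫ θ in (0:ℝ)..2*Real.pi, (u θ).re) = (2*Real.pi) * (κ * g 0).re := by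
    have h0 := key1 g 0
    simp only [pow_zero, one_mul, hq0] at h0
    have h1 : (∫ θ in (0:ℝ)..2*Real.pi, u θ) = (2*(π:ℂ)) * (κ * g 0) := by
      rw [hudef]
      rw [intervalIntegral.integral_const_mul, ← h0]
      rw [show (cauchyPowerSeries g 0 1).coeff 0 = g 0 from hq0]
      ring
    have h2 := Complex.reCLM.intervalIntegral_comp_comm (hu.intervalIntegrable (μ := volume) 0 (2*Real.pi))
    simp only [Complex.reCLM_apply] at h2
    rw [h2, h1, show (2*(π:ℂ)) = ((2*Real.pi : ℝ):ℂ) by push_cast; ring]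
    rw [Complex.re_ofReal_mul]
  have hfin : (∫ θ in (0:ℝ)..2*Real.pi, (2*t - 2*(u θ).re))
      = (2*Real.pi) * (2 * (t - (κ * g 0).re)) := by
    rw [intervalIntegral.integral_sub (intervalIntegrable_const (μ := volume))
      (show IntervalIntegrable (fun θ => 2 * (u θ).re) volume 0 (2*Real.pi) from
        (continuous_const.mul hure).intervalIntegrable _ _),
      intervalIntegral.integral_const, intervalIntegral.integral_const_mul, hmean]
    simp only [smul_eq_mul, sub_zero]
    ring
  rw [hfin] at hnorm
  have h2π : (0:ℝ) < 2 * Real.pi := Real.two_pi_pos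
  exact le_of_mul_le_mul_left hnorm h2π

/-- Bohr's theorem for holomorphic maps from a bounded balanced domain `G` in a
complex Banach space into a convex domain `C ⊊ ℂ`: for `x ∈ (1/3)·G`, the Bohr
sum of the nonconstant terms is bounded by the distance `d(f(0), ∂C)`. -/
theorem bohr_convex {X : Type*} [NormedAddCommGroup X] [NormedSpace ℂ X]
    [CompleteSpace X]
    (G : Set X) (hGopen : IsOpen G) (hGconn : IsConnected G)
    (hGbdd : Bornology.IsBounded G)
    (hGbal : ∀ z : ℂ, ‖z‖ ≤ 1 → z • G ⊆ G)
    (C : Set ℂ) (hCopen : IsOpen C) (hCconn : IsConnected C)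
    (hCconv : Convex ℝ C) (hCne : C ≠ Set.univ)
    (f : X → ℂ) (hf : DifferentiableOn ℂ f G)
    (hmaps : Set.MapsTo f G C)
    (p : FormalMultilinearSeries ℂ X ℂ) (hp : HasFPowerSeriesAt f p 0)
    (x : X) (hx : x ∈ (1 / 3 : ℂ) • G) :
    Summable (fun m : ℕ => ‖p (m + 1) (fun _ => x)‖) ∧
      ∑' m : ℕ, ‖p (m + 1) (fun _ => x)‖ ≤ Metric.infDist (f 0) (frontier C) := by
  classical
  obtain ⟨y, hyG, rfl⟩ := hx
  -- 0 ∈ G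
  have h0G : (0:X) ∈ G := by
    obtain ⟨z, hz⟩ := hGconn.nonempty
    have := hGbal 0 (by simp) (Set.smul_mem_smul_set hz)
    simpa using this
  -- the slice function
  set g : ℂ → ℂ := fun z => f (z • y) with hgdef
  have hzyG : ∀ z ∈ closedBall (0:ℂ) 1, z • y ∈ G := by
    intro z hz
    exact hGbal z (by simpa [Metric.mem_closedBall, dist_eq_norm] using hz)
      (Set.smul_mem_smul_set hyG)
  have hgd : DifferentiableOn ℂ g (closedBall 0 1) := by
    intro z hz
    have h1 : DifferentiableAt ℂ f (z • y) :=
      hf.differentiableAt (hGopen.mem_nhds (hzyG z hz))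
    exact (h1.comp z ((differentiableAt_id.smul_const y))).differentiableWithinAt
  set q := cauchyPowerSeries g 0 1 with hqdef
  have hqb : HasFPowerSeriesOnBall g q 0 1 := by
    have := hgd.hasFPowerSeriesOnBall (R := 1) one_pos
    simpa using this
  -- identify coefficients
  set a : ℕ → ℂ := fun n => p n (fun _ => y) with hadef
  set s : FormalMultilinearSeries ℂ ℂ ℂ :=
    fun n => ContinuousMultilinearMap.mkPiRing ℂ (Fin n) (a n) with hsdef
  have hscoeff : ∀ n, s.coeff n = a n := by
    intro n
    simp [hsdef, FormalMultilinearSeries.coeff, ContinuousMultilinearMap.mkPiRing_apply]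
  have hs : HasFPowerSeriesAt g s 0 := by
    rw [hasFPowerSeriesAt_iff]
    obtain ⟨r, hpr⟩ := hp
    have hcont : Filter.Tendsto (fun z : ℂ => z • y) (nhds 0) (nhds 0) := by
      have : Filter.Tendsto (fun z : ℂ => z • y) (nhds 0) (nhds ((0:ℂ) • y)) :=
        ((continuous_id.smul continuous_const).tendsto 0)
      simpa using this
    have hmem : ∀ᶠ z : ℂ in nhds 0, z • y ∈ EMetric.ball (0:X) r :=
      hcont.eventually_mem (EMetric.ball_mem_nhds _ hpr.r_pos)
    filter_upwards [hmem] with z hz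
    have hsum := hpr.hasSum hz
    have : ∀ n, (p n fun _ => z • y) = z ^ n • s.coeff n := by
      intro n
      rw [hscoeff]
      have := (p n).map_smul_univ (fun _ : Fin n => z) (fun _ => y)
      simpa [hadef, smul_eq_mul] using this
    simpa [this, hgdef] using hsum
  have hqs : q = s := hqb.hasFPowerSeriesAt.eq_formalMultilinearSeries hs
  have hqa : ∀ n, q.coeff n = a n := fun n => by rw [hqs, hscoeff]
  -- geometry of C
  have hf0C : f 0 ∈ C := hmaps h0G
  have hfrne : (frontier C).Nonempty := by
    by_contra h
    rw [Set.not_nonempty_iff_eq_empty] at h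
    have hclosed : IsClosed C := by
      have : closure C ⊆ C := by
        intro z hz
        by_contra hzC
        exact (Set.eq_empty_iff_forall_notMem.1 h z) ⟨hz, by rwa [hCopen.interior_eq]⟩
      exact isClosed_of_closure_subset this
    rcases isClopen_iff.1 ⟨hclosed, hCopen⟩ with h1 | h1
    · exact (Set.eq_empty_iff_forall_notMem.1 h1 (f 0)) hf0C
    · exact hCne h1
  set d := Metric.infDist (f 0) (frontier C) with hddef
  obtain ⟨w, hwfr, hdw⟩ := isClosed_frontier.exists_infDist_eq_dist hfrne (f 0)
  have hwC : w ∉ C := by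
    rw [hCopen.frontier_eq] at hwfr
    exact hwfr.2
  obtain ⟨φ, hφ⟩ := geometric_hahn_banach_open_point hCconv hCopen hwC
  set κ : ℂ := ((φ 1 : ℝ) : ℂ) - ((φ I : ℝ) : ℂ) * I with hκdef
  have hre : ∀ z : ℂ, (κ * z).re = φ z := by
    intro z
    have hz : φ z = z.re • φ 1 + z.im • φ I := by
      conv_lhs => rw [show z = z.re • (1:ℂ) + z.im • I by
        simp [Complex.real_smul, Complex.re_add_im]]
      rw [map_add, _root_.map_smul, _root_.map_smul]
    rw [hz]
    simp [hκdef, Complex.mul_re, smul_eq_mul]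
    ring
  set t : ℝ := φ w with htdef
  have hb : ∀ z ∈ closedBall (0:ℂ) 1, (κ * g z).re ≤ t := by
    intro z hz
    rw [hre]
    exact (hφ _ (hmaps (hzyG z hz))).le
  have hκ0 : κ ≠ 0 := by
    intro h
    have h1 := hφ _ hf0C
    have h2 : (κ * f 0).re < (κ * w).re := by rw [hre, hre]; exact h1
    rw [h] at h2
    simp at h2
  have hg0 : g 0 = f 0 := by simp [hgdef]
  have hδ : t - (κ * f 0).re ≤ ‖κ‖ * d := by
    have h1 : t - (κ * f 0).re = (κ * (w - f 0)).re := by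
      rw [mul_sub, Complex.sub_re, hre w]
    rw [h1]
    calc (κ * (w - f 0)).re ≤ ‖κ * (w - f 0)‖ := Complex.re_le_norm _
      _ = ‖κ‖ * ‖w - f 0‖ := by rw [norm_mul]
      _ = ‖κ‖ * d := by
          rw [hddef, hdw, dist_eq_norm]
          congr 1
          exact norm_sub_rev _ _
  -- coefficient bound
  have hcoeff : ∀ m : ℕ, ‖a (m+1)‖ ≤ 2 * d := by
    intro m
    have h1 := carath g hgd κ t hb m
    rw [norm_mul, hqa, hg0] at h1
    have h2 : ‖κ‖ * ‖a (m+1)‖ ≤ ‖κ‖ * (2 * d) := by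
      calc ‖κ‖ * ‖a (m+1)‖ ≤ 2 * (t - (κ * f 0).re) := h1
        _ ≤ 2 * (‖κ‖ * d) := by linarith
        _ = ‖κ‖ * (2 * d) := by ring
    exact le_of_mul_le_mul_left h2 (norm_pos_iff.2 hκ0)
  -- transfer to x
  have hpx : ∀ n : ℕ, ‖p n (fun _ => (1/3:ℂ) • y)‖ = (1/3:ℝ)^n * ‖a n‖ := by
    intro n
    have := (p n).map_smul_univ (fun _ : Fin n => (1/3:ℂ)) (fun _ => y)
    rw [show (fun i : Fin n => (1/3:ℂ) • y) = (fun i : Fin n => (1/3:ℂ) • (fun _ : Fin n => y) i)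
      from rfl, this]
    rw [norm_smul]
    congr 1
    simp
  have hbound : ∀ m : ℕ, ‖p (m+1) (fun _ => (1/3:ℂ) • y)‖ ≤ (2*d/3) * (1/3:ℝ)^m := by
    intro m
    rw [hpx]
    have h1 : (0:ℝ) ≤ (1/3:ℝ)^(m+1) := by positivity
    calc (1/3:ℝ)^(m+1) * ‖a (m+1)‖ ≤ (1/3:ℝ)^(m+1) * (2*d) :=
        mul_le_mul_of_nonneg_left (hcoeff m) h1
      _ = (2*d/3) * (1/3:ℝ)^m := by rw [pow_succ]; ring
  have hsummable : Summable (fun m : ℕ => (2*d/3) * (1/3:ℝ)^m) :=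
    (summable_geometric_of_lt_one (by norm_num) (by norm_num)).mul_left _
  have hsum : Summable (fun m : ℕ => ‖p (m + 1) (fun _ => (1/3:ℂ) • y)‖) :=
    Summable.of_nonneg_of_le (fun m => norm_nonneg _) hbound hsummable
  refine ⟨hsum, ?_⟩
  calc ∑' m : ℕ, ‖p (m + 1) (fun _ => (1/3:ℂ) • y)‖
      ≤ ∑' m : ℕ, (2*d/3) * (1/3:ℝ)^m := Summable.tsum_le_tsum hbound hsum hsummable
    _ = (2*d/3) * (1 - 1/3)⁻¹ := by
        rw [tsum_mul_left, tsum_geometric_of_lt_one (by norm_num) (by norm_num)]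
    _ = d := by ring
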